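/- Let (c_ε)_{ε∈(0,1]} be a net of nonnegative real numbers and define u_ε : ℝ → ℝ by u_ε(x) = 1/(1 + c_ε x²). Then the following are equivalent: (a) there exists N ∈ ℕ such that for every k ∈ ℕ there is C > 0 with sup_{x∈[-1,1]} |u_ε^{(k)}(x)| ≤ C ε^{-N} for all ε ∈ (0,1] (i.e., the net (u_ε)_ε satisfies the G^∞-estimates near 0); (b) for every p ∈ ℕ there is C > 0 with c_ε^p ≤ C ε^{-1} for all ε ∈ (0,1] (i.e., (c_ε)_ε has slow scale growth). -/

import Mathlib

open MeasureTheory Set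

noncomputable section

open Complex Nat

lemma iterDeriv_one (k : ℕ) :
    iteratedDeriv k (fun _ : ℝ => (1:ℝ)) = fun _ => if k = 0 then (1:ℝ) else 0 := by
  induction k with
  | zero => simp [iteratedDeriv_zero]
  | succ n ih => rw [iteratedDeriv_succ, ih]; funext x; simp

lemma deriv_ofReal_comp (g : ℝ → ℝ) (x : ℝ) :
    deriv (fun y : ℝ => ((g y : ℝ) : ℂ)) x = ((deriv g x : ℝ) : ℂ) := by
  by_cases h : DifferentiableAt ℝ g x
  · exact (h.hasDerivAt.ofReal_comp).deriv
  · rw [deriv_zero_of_not_differentiableAt h, deriv_zero_of_not_differentiableAt,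
      Complex.ofReal_zero]
    intro hd
    have h2 : DifferentiableAt ℝ (fun y : ℝ => ((g y : ℝ) : ℂ).re) x :=
      (Complex.reCLM.differentiable.differentiableAt).comp x hd
    exact h (by simpa using h2)

lemma iterDeriv_ofReal (f : ℝ → ℝ) (k : ℕ) :
    iteratedDeriv k (fun y : ℝ => ((f y : ℝ) : ℂ)) = fun x => ((iteratedDeriv k f x : ℝ) : ℂ) := by
  induction k with
  | zero => simp [iteratedDeriv_zero]
  | succ n ih =>
    rw [iteratedDeriv_succ, ih]
    funext x
    rw [deriv_ofReal_comp, iteratedDeriv_succ]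

lemma key_formula (c : ℝ) (hc : 0 < c) (k : ℕ) :
    iteratedDeriv k (fun y : ℝ => ((1 / (1 + c * y ^ 2) : ℝ) : ℂ))
      = fun x : ℝ =>
        (2 * ((((Real.sqrt c)⁻¹ : ℝ) : ℂ) * Complex.I) * (c : ℂ))⁻¹ *
          ((-1) ^ k * (k ! : ℂ) *
            (((x : ℂ) - (((Real.sqrt c)⁻¹ : ℝ) : ℂ) * Complex.I) ^ (-(k : ℤ) - 1)
              - ((x : ℂ) + (((Real.sqrt c)⁻¹ : ℝ) : ℂ) * Complex.I) ^ (-(k : ℤ) - 1))) := by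
  set s : ℝ := Real.sqrt c with hs_def
  have hs : 0 < s := Real.sqrt_pos.2 hc
  set a : ℂ := ((s⁻¹ : ℝ) : ℂ) * Complex.I with ha_def
  have hs2 : (s : ℝ) ^ 2 = c := Real.sq_sqrt hc.le
  have hsub : ∀ x : ℝ, (x : ℂ) - a ≠ 0 := by
    intro x h
    have h2 := congrArg Complex.im h
    simp [ha_def] at h2
    exact hs.ne' h2
  have hadd : ∀ x : ℝ, (x : ℂ) + a ≠ 0 := by
    intro x h
    have h2 := congrArg Complex.im h
    simp [ha_def] at h2
    exact hs.ne' h2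
  induction k with
  | zero =>
    funext y
    have h1 : ((1 : ℂ) + (c : ℂ) * (y : ℂ) ^ 2) ≠ 0 := by
      have he : ((1 : ℂ) + (c : ℂ) * (y : ℂ) ^ 2) = ((1 + c * y ^ 2 : ℝ) : ℂ) := by push_cast; ring
      rw [he, Complex.ofReal_ne_zero]
      nlinarith [sq_nonneg y, hc]
    have ha2 : a ^ 2 = -((c : ℂ))⁻¹ := by
      have hc' : ((c:ℝ) : ℂ) = ((s : ℝ) : ℂ) ^ 2 := by
        rw [← hs2]; push_cast; ring
      have hsne : ((s:ℝ):ℂ) ≠ 0 := Complex.ofReal_ne_zero.2 hs.ne'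
      rw [ha_def, hc']
      rw [mul_pow, Complex.I_sq]
      push_cast
      field_simp
    have hcne : ((c:ℝ):ℂ) ≠ 0 := Complex.ofReal_ne_zero.2 hc.ne'
    have hane : a ≠ 0 := by
      rw [ha_def]
      simp [Complex.ext_iff]
      exact hs.ne'
    simp only [iteratedDeriv_zero]
    push_cast
    simp only [show (-(0:ℤ) - 1) = (-1 : ℤ) by ring, zpow_neg_one, pow_zero, one_mul,
      Nat.factorial_zero, Nat.cast_one]
    have hinv : ((y:ℂ)-a)⁻¹ - ((y:ℂ)+a)⁻¹ = (2*a) / (((y:ℂ)-a)*((y:ℂ)+a)) := by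
      rw [inv_sub_inv (hsub y) (hadd y)]
      ring_nf
    rw [hinv, show ((y:ℂ)-a)*((y:ℂ)+a) = (y:ℂ)^2 - a^2 from by ring, ha2, sub_neg_eq_add]
    have hden : (y:ℂ)^2 + ((c:ℂ))⁻¹ ≠ 0 := by
      intro h
      apply h1
      have he : (c:ℂ) * ((y:ℂ)^2 + ((c:ℂ))⁻¹) = 1 + (c:ℂ)*(y:ℂ)^2 := by
        field_simp
        ring
      rw [← he, h, mul_zero]
    have hr : (2*a*(c:ℂ))⁻¹ * (2*a / ((y:ℂ)^2 + ((c:ℂ))⁻¹)) = ((c:ℂ) * ((y:ℂ)^2+((c:ℂ))⁻¹))⁻¹ := by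
      field_simp
    rw [hr, show (c:ℂ)*((y:ℂ)^2+((c:ℂ))⁻¹) = 1 + (c:ℂ)*(y:ℂ)^2 from by field_simp; ring, one_div]
  | succ n ih =>
    rw [iteratedDeriv_succ, ih]
    funext x
    have hd1 : HasDerivAt (fun y : ℝ => ((y : ℂ) - a) ^ (-(n : ℤ) - 1))
        ((-(n : ℤ) - 1) * ((x : ℂ) - a) ^ (-(n : ℤ) - 1 - 1)) x := by
      have h0 : HasDerivAt (fun z : ℂ => (z - a) ^ (-(n : ℤ) - 1))
          ((-(n : ℤ) - 1) * ((x : ℂ) - a) ^ (-(n : ℤ) - 1 - 1)) (x : ℂ) := by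
        simpa [Function.comp_def] using
          ((hasDerivAt_zpow (-(n : ℤ) - 1) ((x : ℂ) - a) (Or.inl (hsub x))).comp (x : ℂ)
            ((hasDerivAt_id ((x : ℂ))).sub_const a))
      exact h0.comp_ofReal
    have hd2 : HasDerivAt (fun y : ℝ => ((y : ℂ) + a) ^ (-(n : ℤ) - 1))
        ((-(n : ℤ) - 1) * ((x : ℂ) + a) ^ (-(n : ℤ) - 1 - 1)) x := by
      have h0 : HasDerivAt (fun z : ℂ => (z + a) ^ (-(n : ℤ) - 1))
          ((-(n : ℤ) - 1) * ((x : ℂ) + a) ^ (-(n : ℤ) - 1 - 1)) (x : ℂ) := by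
        simpa [Function.comp_def] using
          ((hasDerivAt_zpow (-(n : ℤ) - 1) ((x : ℂ) + a) (Or.inl (hadd x))).comp (x : ℂ)
            ((hasDerivAt_id ((x : ℂ))).add_const a))
      exact h0.comp_ofReal
    have hD := (((hd1.sub hd2).const_mul ((-1 : ℂ) ^ n * (n ! : ℂ))).const_mul
      ((2 * a * (c : ℂ))⁻¹)).deriv
    simp only [Pi.sub_apply] at hD
    rw [hD]
    have hexp : (-(↑(n+1) : ℤ) - 1) = (-(n : ℤ) - 1 - 1) := by push_cast; ring
    rw [hexp]
    rw [Nat.factorial_succ]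
    push_cast
    ring

lemma norm_coeff (c : ℝ) (hc : 0 < c) :
    ‖(2 * ((((Real.sqrt c)⁻¹ : ℝ) : ℂ) * Complex.I) * (c : ℂ))⁻¹‖
      = (2 * (Real.sqrt c)⁻¹ * c)⁻¹ := by
  have hs : 0 < Real.sqrt c := Real.sqrt_pos.2 hc
  rw [norm_inv]
  congr 1
  rw [norm_mul, norm_mul, norm_mul, Complex.norm_I, Complex.norm_real, Complex.norm_real]
  simp [abs_of_pos hs, abs_of_pos hc, abs_of_pos (inv_pos.2 hs)]

lemma norm_zpow_term (c : ℝ) (hc : 0 < c) (k : ℕ) (z : ℂ)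
    (hz : (Real.sqrt c)⁻¹ ≤ ‖z‖) :
    ‖z ^ (-(k : ℤ) - 1)‖ ≤ Real.sqrt c ^ (k + 1) := by
  have hs : 0 < Real.sqrt c := Real.sqrt_pos.2 hc
  have hz0 : 0 < ‖z‖ := lt_of_lt_of_le (inv_pos.2 hs) hz
  rw [show (-(k : ℤ) - 1) = -((k + 1 : ℕ) : ℤ) by push_cast; ring, zpow_neg, zpow_natCast,
    norm_inv, norm_pow]
  calc (‖z‖ ^ (k+1))⁻¹ ≤ (((Real.sqrt c)⁻¹) ^ (k+1))⁻¹ := by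
        apply inv_anti₀ (pow_pos (inv_pos.2 hs) _)
        exact pow_le_pow_left₀ (inv_pos.2 hs).le hz (k+1)
    _ = Real.sqrt c ^ (k+1) := by rw [inv_pow, inv_inv]

lemma norm_sub_a_ge (c : ℝ) (hc : 0 < c) (x : ℝ) :
    (Real.sqrt c)⁻¹ ≤ ‖(x : ℂ) - (((Real.sqrt c)⁻¹ : ℝ) : ℂ) * Complex.I‖ := by
  have h := Complex.abs_im_le_norm ((x : ℂ) - (((Real.sqrt c)⁻¹ : ℝ) : ℂ) * Complex.I)
  simp only [Complex.sub_im, Complex.add_im, Complex.ofReal_im, Complex.mul_im,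
    Complex.ofReal_re, Complex.I_im, Complex.I_re, mul_one, mul_zero, add_zero, zero_sub,
    zero_add, abs_neg] at h
  rwa [_root_.abs_of_nonneg (by positivity)] at h

lemma norm_add_a_ge (c : ℝ) (hc : 0 < c) (x : ℝ) :
    (Real.sqrt c)⁻¹ ≤ ‖(x : ℂ) + (((Real.sqrt c)⁻¹ : ℝ) : ℂ) * Complex.I‖ := by
  have h := Complex.abs_im_le_norm ((x : ℂ) + (((Real.sqrt c)⁻¹ : ℝ) : ℂ) * Complex.I)
  simp only [Complex.sub_im, Complex.add_im, Complex.ofReal_im, Complex.mul_im,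
    Complex.ofReal_re, Complex.I_im, Complex.I_re, mul_one, mul_zero, add_zero, zero_sub,
    zero_add, abs_neg] at h
  rwa [_root_.abs_of_nonneg (by positivity)] at h

lemma abs_eq_norm_complex (f : ℝ → ℝ) (k : ℕ) (x : ℝ) :
    |iteratedDeriv k f x| = ‖iteratedDeriv k (fun y : ℝ => ((f y : ℝ) : ℂ)) x‖ := by
  rw [iterDeriv_ofReal, Complex.norm_real, Real.norm_eq_abs]

lemma upper_bound (c : ℝ) (hc : 0 ≤ c) (k : ℕ) (x : ℝ) :
    |iteratedDeriv k (fun y : ℝ => 1 / (1 + c * y ^ 2)) x| ≤ (k ! : ℝ) * (c ^ k + 1) := by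
  have hfact : (1 : ℝ) ≤ (k ! : ℝ) := by exact_mod_cast Nat.one_le_iff_ne_zero.2 k.factorial_ne_zero
  have hck : (0:ℝ) ≤ c ^ k := pow_nonneg hc k
  rcases eq_or_lt_of_le hc with h0 | hpos
  · have hfun : (fun y : ℝ => 1 / (1 + c * y ^ 2)) = fun _ => (1:ℝ) := by
      funext y; rw [← h0]; norm_num
    rw [hfun, iterDeriv_one]
    have hle : |if k = 0 then (1:ℝ) else 0| ≤ 1 := by split <;> simp
    nlinarith
  · have hs : 0 < Real.sqrt c := Real.sqrt_pos.2 hpos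
    have hs2 : Real.sqrt c ^ 2 = c := Real.sq_sqrt hpos.le
    rw [abs_eq_norm_complex (fun y : ℝ => 1 / (1 + c * y ^ 2)) k x]
    have hkf := key_formula c hpos k
    rw [show (fun y : ℝ => ((1 / (1 + c * y ^ 2) : ℝ) : ℂ)) =
        (fun y : ℝ => (((fun t : ℝ => 1 / (1 + c * t ^ 2)) y : ℝ) : ℂ)) from rfl] at hkf
    rw [hkf]
    have hA := norm_zpow_term c hpos k _ (norm_sub_a_ge c hpos x)
    have hB := norm_zpow_term c hpos k _ (norm_add_a_ge c hpos x)
    calc ‖(2 * ((((Real.sqrt c)⁻¹ : ℝ) : ℂ) * Complex.I) * (c : ℂ))⁻¹ *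
          ((-1) ^ k * (k ! : ℂ) *
            (((x : ℂ) - (((Real.sqrt c)⁻¹ : ℝ) : ℂ) * Complex.I) ^ (-(k : ℤ) - 1)
              - ((x : ℂ) + (((Real.sqrt c)⁻¹ : ℝ) : ℂ) * Complex.I) ^ (-(k : ℤ) - 1)))‖
        = (2 * (Real.sqrt c)⁻¹ * c)⁻¹ * ((k ! : ℝ) *
            ‖((x : ℂ) - (((Real.sqrt c)⁻¹ : ℝ) : ℂ) * Complex.I) ^ (-(k : ℤ) - 1)
              - ((x : ℂ) + (((Real.sqrt c)⁻¹ : ℝ) : ℂ) * Complex.I) ^ (-(k : ℤ) - 1)‖) := by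
          rw [norm_mul, norm_coeff c hpos, norm_mul, norm_mul, norm_pow, norm_neg, norm_one,
            one_pow, one_mul, Complex.norm_natCast]
      _ ≤ (2 * (Real.sqrt c)⁻¹ * c)⁻¹ * ((k ! : ℝ) *
            (Real.sqrt c ^ (k+1) + Real.sqrt c ^ (k+1))) := by
          apply mul_le_mul_of_nonneg_left _ (by positivity)
          apply mul_le_mul_of_nonneg_left _ (by positivity)
          exact le_trans (norm_sub_le _ _) (add_le_add hA hB)
      _ = (k ! : ℝ) * Real.sqrt c ^ k := by
          rw [← hs2]
          field_simp
          simp only [Real.sqrt_sq hs.le]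
          ring
      _ ≤ (k ! : ℝ) * (c ^ k + 1) := by
          apply mul_le_mul_of_nonneg_left _ (by positivity)
          rcases le_or_gt (Real.sqrt c) 1 with h1 | h1
          · have := pow_le_one₀ hs.le h1 (n := k)
            nlinarith
          · have hsc : Real.sqrt c ≤ c := by nlinarith
            have := pow_le_pow_left₀ hs.le hsc k
            nlinarith

lemma lower_bound (c : ℝ) (hc : 0 ≤ c) (m : ℕ) :
    c ^ m ≤ |iteratedDeriv (2 * m) (fun y : ℝ => 1 / (1 + c * y ^ 2)) 0| := by
  rcases eq_or_lt_of_le hc with h0 | hpos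
  · rcases Nat.eq_zero_or_pos m with hm | hm
    · subst hm
      simp only [pow_zero, mul_zero, iteratedDeriv_zero]
      rw [← h0]
      norm_num
    · rw [← h0, zero_pow (Nat.pos_iff_ne_zero.1 hm)]
      exact abs_nonneg _
  · have hs : 0 < Real.sqrt c := Real.sqrt_pos.2 hpos
    have hs2 : Real.sqrt c ^ 2 = c := Real.sq_sqrt hpos.le
    set s : ℝ := Real.sqrt c with hsdef
    set a : ℂ := ((s⁻¹ : ℝ) : ℂ) * Complex.I with hadef
    rw [abs_eq_norm_complex (fun y : ℝ => 1 / (1 + c * y ^ 2)) (2*m) 0]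
    have hkf := key_formula c hpos (2*m)
    rw [show (fun y : ℝ => ((1 / (1 + c * y ^ 2) : ℝ) : ℂ)) =
        (fun y : ℝ => (((fun t : ℝ => 1 / (1 + c * t ^ 2)) y : ℝ) : ℂ)) from rfl] at hkf
    rw [hkf]
    simp only []
    set w : ℤ := -((2*m : ℕ) : ℤ) - 1 with hw
    have h1 : (((0:ℝ) : ℂ)) - a = -a := by simp
    have h2 : (((0:ℝ) : ℂ)) + a = a := by simp
    have hodd : (-a) ^ w = -(a ^ w) := by
      rw [show w = -((2*m+1 : ℕ) : ℤ) by rw [hw]; push_cast; ring, zpow_neg, zpow_natCast,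
        zpow_neg, zpow_natCast, Odd.neg_pow ⟨m, by ring⟩, inv_neg]
    have hneg1 : ((-1:ℂ)) ^ (2*m) = 1 := Even.neg_one_pow (even_two_mul m)
    rw [h1, h2, hodd, hneg1]
    rw [show (2 * a * (c : ℂ))⁻¹ * (1 * ((2*m) ! : ℂ) * (-(a ^ w) - a ^ w))
        = (2 * a * (c : ℂ))⁻¹ * ((2*m) ! : ℂ) * ((-2) * a ^ w) from by ring]
    have hna : ‖a‖ = s⁻¹ := by
      rw [hadef, norm_mul, Complex.norm_I, Complex.norm_real, mul_one, Real.norm_eq_abs,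
        _root_.abs_of_nonneg (by positivity)]
    have hnaz : ‖a ^ w‖ = s ^ (2*m+1) := by
      rw [show w = -((2*m+1 : ℕ) : ℤ) by rw [hw]; push_cast; ring, zpow_neg, zpow_natCast,
        norm_inv, norm_pow, hna, inv_pow, inv_inv]
    have hnK : ‖(2 * a * (c : ℂ))⁻¹‖ = (2 * s⁻¹ * c)⁻¹ := by
      rw [norm_inv, norm_mul, norm_mul, hna, Complex.norm_real, Real.norm_eq_abs,
        _root_.abs_of_pos hpos]
      norm_num
    rw [norm_mul, norm_mul, norm_mul, hnaz, hnK, Complex.norm_natCast, norm_neg]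
    have hval : (2 * s⁻¹ * c)⁻¹ * ((2*m) ! : ℝ) * (‖(2:ℂ)‖ * s ^ (2*m+1))
        = ((2*m) ! : ℝ) * c ^ m := by
      rw [Complex.norm_ofNat, show c = s ^ 2 from hs2.symm, ← pow_mul]
      field_simp
      ring
    rw [hval]
    have hfac : (1:ℝ) ≤ ((2*m) ! : ℝ) := by
      exact_mod_cast Nat.one_le_iff_ne_zero.2 (2*m).factorial_ne_zero
    nlinarith [pow_nonneg hpos.le m]


/-- The parameter range `(0,1]` for `ε`. -/
def Eps : Set ℝ := Set.Ioc 0 1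

/-- for `u_ε(x) = 1/(1+c_ε x²)` with `c_ε ≥ 0`, the `G^∞`-estimates near `0`
hold if and only if `(c_ε)` has slow scale growth (Remark after the noncharacteristic
regularity theorem, following Example 4.6 of H\"ormann–Oberguggenberger). -/
theorem statement11 (c : ℝ → ℝ) (hc : ∀ ε ∈ Eps, 0 ≤ c ε) :
    (∃ N : ℕ, ∀ k : ℕ, ∃ C > 0, ∀ ε ∈ Eps, ∀ x ∈ Set.Icc (-1 : ℝ) 1,
      |iteratedDeriv k (fun y : ℝ => 1 / (1 + c ε * y ^ 2)) x| ≤ C * ε ^ (-(N : ℤ))) ↔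
    (∀ p : ℕ, ∃ C > 0, ∀ ε ∈ Eps, c ε ^ p ≤ C * ε⁻¹) := by
  constructor
  · rintro ⟨N, hN⟩ p
    set M : ℕ := max N 1 with hM
    have hM1 : 1 ≤ M := le_max_right N 1
    have hNM : N ≤ M := le_max_left N 1
    obtain ⟨C, hC0, hC⟩ := hN (2 * (p * M))
    refine ⟨max C 1, lt_of_lt_of_le one_pos (le_max_right _ _), fun ε hε => ?_⟩
    obtain ⟨hε0, hε1⟩ := hε
    have hcε := hc ε ⟨hε0, hε1⟩
    have hx0 : (0:ℝ) ∈ Set.Icc (-1:ℝ) 1 := by norm_num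
    have hkey : c ε ^ (p * M) ≤ C * ε ^ (-(N:ℤ)) :=
      le_trans (lower_bound (c ε) hcε (p * M)) (hC ε ⟨hε0, hε1⟩ 0 hx0)
    have hεM : ε ^ (-(N:ℤ)) ≤ ε ^ (-(M:ℤ)) := by
      rw [zpow_neg, zpow_neg, zpow_natCast, zpow_natCast]
      exact inv_anti₀ (pow_pos hε0 M) (pow_le_pow_of_le_one hε0.le hε1 hNM)
    have h3 : (c ε ^ p * ε) ^ M ≤ C := by
      calc (c ε ^ p * ε) ^ M = c ε ^ (p*M) * ε ^ M := by rw [mul_pow, pow_mul]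
        _ ≤ C * ε ^ (-(M:ℤ)) * ε ^ M := by
            apply mul_le_mul_of_nonneg_right
              (le_trans hkey (mul_le_mul_of_nonneg_left hεM hC0.le)) (pow_nonneg hε0.le M)
        _ = C := by
            rw [zpow_neg, zpow_natCast, mul_assoc, inv_mul_cancel₀ (pow_pos hε0 M).ne', mul_one]
    rw [show (max C 1) * ε⁻¹ = (max C 1) / ε from by rw [div_eq_mul_inv], le_div_iff₀ hε0]
    by_contra hcon
    push_neg at hcon
    have h1le : (1:ℝ) ≤ c ε ^ p * ε := le_trans (le_max_right C 1) hcon.le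
    have hself : c ε ^ p * ε ≤ (c ε ^ p * ε) ^ M :=
      le_self_pow₀ h1le (Nat.one_le_iff_ne_zero.1 hM1)
    have := le_trans hself h3
    have := le_max_left C (1:ℝ)
    linarith
  · intro h
    refine ⟨1, fun k => ?_⟩
    obtain ⟨C, hC0, hC⟩ := h k
    refine ⟨(k ! : ℝ) * (C + 1), by positivity, fun ε hε x hx => ?_⟩
    obtain ⟨hε0, hε1⟩ := hε
    have hcε := hc ε ⟨hε0, hε1⟩
    have hu := upper_bound (c ε) hcε k x
    have h1 : c ε ^ k ≤ C * ε⁻¹ := hC ε ⟨hε0, hε1⟩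
    have h2 : (1:ℝ) ≤ ε⁻¹ := by
      rw [le_inv_comm₀ one_pos hε0]
      simpa using hε1
    have hfacpos : (0:ℝ) < (k ! : ℝ) := by positivity
    rw [show ε ^ (-((1:ℕ):ℤ)) = ε⁻¹ from by simp]
    calc |iteratedDeriv k (fun y : ℝ => 1 / (1 + c ε * y ^ 2)) x|
        ≤ (k ! : ℝ) * (c ε ^ k + 1) := hu
      _ ≤ (k ! : ℝ) * (C * ε⁻¹ + 1 * ε⁻¹) := by
          apply mul_le_mul_of_nonneg_left _ hfacpos.le
          apply add_le_add h1
          simpa using h2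
      _ = (k ! : ℝ) * (C + 1) * ε⁻¹ := by ring
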